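/- Let n ≥ 1 and let d be a positive divisor of n. The number of units u of Z/nZ satisfying u·d ≡ d (mod n) equals ∏_p m_p, where the product is over all prime divisors p of n, and m_p = φ(p^{ν_p(n)}) if ν_p(d) = ν_p(n), while m_p = p^{ν_p(d)} if ν_p(d) < ν_p(n); here ν_p denotes the p-adic valuation and φ is Euler's totient function. -/
import Mathlib

lemma tot_prod_factorization {n : ℕ} (hn : n ≠ 0) :
    Nat.totient n = ∏ p ∈ n.primeFactors, Nat.totient (p ^ n.factorization p) := by
  rw [Nat.totient_eq_prod_factorization hn, Finsupp.prod, Nat.support_factorization]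
  refine Finset.prod_congr rfl fun p hp => ?_
  have hp' := Nat.prime_of_mem_primeFactors hp
  have hk : 0 < n.factorization p := Nat.Prime.factorization_pos_of_dvd hp' hn
    (Nat.dvd_of_mem_primeFactors hp)
  rw [Nat.totient_prime_pow hp' hk]

theorem stabilizer_size_general (n : ℕ) (hn : 1 ≤ n) (d : ℕ) (hd : 0 < d) (hdn : d ∣ n) :
    Nat.card {u : (ZMod n)ˣ // (u : ZMod n) * (d : ZMod n) = (d : ZMod n)} =
      ∏ p ∈ n.primeFactors,
        (if d.factorization p = n.factorization p then Nat.totient (p ^ (n.factorization p))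
         else p ^ (d.factorization p)) := by
  have hn0 : n ≠ 0 := by omega
  haveI : NeZero n := ⟨hn0⟩
  set m := n / d with hm
  have hmn : m ∣ n := Nat.div_dvd_of_dvd hdn
  have hnmd : n = m * d := (Nat.div_mul_cancel hdn).symm
  have hm0 : m ≠ 0 := by
    intro h; rw [h, zero_mul] at hnmd; exact hn0 hnmd
  haveI : NeZero m := ⟨hm0⟩
  -- Step A: the subtype is equivalent to the kernel of unitsMap
  have key : ∀ u : (ZMod n)ˣ,
      ((u : ZMod n) * (d : ZMod n) = (d : ZMod n)) ↔ u ∈ (ZMod.unitsMap hmn).ker := by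
    intro u
    have L : ∀ x : ZMod n, x * (d : ZMod n) = 0 ↔ (ZMod.castHom hmn (ZMod m)) x = 0 := by
      intro x
      obtain ⟨k, rfl⟩ := ZMod.natCast_zmod_surjective (n := n) x
      rw [← Nat.cast_mul, ZMod.natCast_eq_zero_iff, map_natCast,
        ZMod.natCast_eq_zero_iff]
      constructor
      · intro h
        exact (Nat.mul_dvd_mul_iff_right hd).mp (hnmd ▸ h)
      · intro h
        rw [hnmd]; exact Nat.mul_dvd_mul h dvd_rfl
    have := L ((u : ZMod n) - 1)
    rw [sub_mul, one_mul, sub_eq_zero, map_sub, map_one, sub_eq_zero] at this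
    rw [this, MonoidHom.mem_ker, ZMod.unitsMap_def]
    constructor
    · intro h; ext; simpa using h
    · intro h; simpa using congrArg (fun v : (ZMod m)ˣ => (v : ZMod m)) h
  have cardeq : Nat.card {u : (ZMod n)ˣ // (u : ZMod n) * (d : ZMod n) = (d : ZMod n)} =
      Nat.card (ZMod.unitsMap hmn).ker :=
    Nat.card_congr (Equiv.subtypeEquivRight key)
  -- Step B: card ker * φ m = φ n
  have hsurj := ZMod.unitsMap_surjective (n := m) hmn
  have hquot : Nat.card ((ZMod n)ˣ ⧸ (ZMod.unitsMap hmn).ker) = Nat.totient m := by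
    rw [Nat.card_congr (QuotientGroup.quotientKerEquivOfSurjective _ hsurj).toEquiv]
    rw [Nat.card_eq_fintype_card, ZMod.card_units_eq_totient]
  have hB : Nat.totient m * Nat.card (ZMod.unitsMap hmn).ker = Nat.totient n := by
    rw [← hquot, ← Subgroup.card_eq_card_quotient_mul_card_subgroup,
      Nat.card_eq_fintype_card, ZMod.card_units_eq_totient]
  -- Step C: φ m * RHS = φ n
  have hsub : m.primeFactors ⊆ n.primeFactors := Nat.primeFactors_mono hmn hn0
  have hmfact : ∀ p, m.factorization p = n.factorization p - d.factorization p := by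
    intro p
    rw [hm, Nat.factorization_div hdn]; simp
  have hC : Nat.totient m *
      (∏ p ∈ n.primeFactors,
        (if d.factorization p = n.factorization p then Nat.totient (p ^ (n.factorization p))
         else p ^ (d.factorization p))) = Nat.totient n := by
    rw [tot_prod_factorization hm0, tot_prod_factorization hn0,
      Finset.prod_subset hsub (fun p _ hp => by
        have h0 : m.factorization p = 0 := by
          rw [← Nat.support_factorization] at hp
          exact Finsupp.notMem_support_iff.mp hp
        rw [h0]; simp), ← Finset.prod_mul_distrib]
    refine Finset.prod_congr rfl fun p hp => ?_
    have hp' := Nat.prime_of_mem_primeFactors hp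
    have hka : d.factorization p ≤ n.factorization p :=
      (Nat.factorization_le_iff_dvd (by omega) hn0).mpr hdn p
    have ha : 0 < n.factorization p := Nat.Prime.factorization_pos_of_dvd hp' hn0
      (Nat.dvd_of_mem_primeFactors hp)
    rw [hmfact p]
    by_cases h : d.factorization p = n.factorization p
    · rw [if_pos h, h]; simp
    · rw [if_neg h]
      have hk : d.factorization p < n.factorization p := lt_of_le_of_ne hka h
      rw [Nat.totient_prime_pow hp' (by omega), Nat.totient_prime_pow hp' ha,
        mul_right_comm, ← pow_add]
      congr 2
      omega
  have hφm : 0 < Nat.totient m := Nat.totient_pos.mpr (Nat.pos_of_ne_zero hm0)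
  rw [cardeq]
  exact Nat.eq_of_mul_eq_mul_left hφm (hB.trans hC.symm)
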